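/- Let G be a group. The assignment X ↦ T^X, with T^X(g, a) = (X (single g 1)) (g·a), is a ℂ-linear bijection from the space of all derivations of ℂ[G] onto the space of all locally finitely supported additive characters, i.e. all functions T : G → G → ℂ such that (i) T(g₂·g₁, a) = T(g₂, g₁·a·g₁⁻¹) + T(g₁, a) for all g₁, g₂, a ∈ G, and (ii) for every g ∈ G the set {a ∈ G : T(g, a) ≠ 0} is finite. -/

import Mathlib

noncomputable def charOf {G : Type*} [Group G]
    (X : MonoidAlgebra ℂ G →ₗ[ℂ] MonoidAlgebra ℂ G) : G → G → ℂ :=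
  fun g a => (X (MonoidAlgebra.single g 1)).coeff (g * a)

section Aux

variable {G : Type*} [Group G]

/-- charOf determines X: injectivity (globally). -/
lemma charOf_injective (X Y : MonoidAlgebra ℂ G →ₗ[ℂ] MonoidAlgebra ℂ G)
    (h : charOf X = charOf Y) : X = Y := by
  refine MonoidAlgebra.lhom_ext' fun g => LinearMap.ext fun b => ?_
  show X (MonoidAlgebra.single g b) = Y (MonoidAlgebra.single g b)
  have hb : (MonoidAlgebra.single g b : MonoidAlgebra ℂ G) = b • MonoidAlgebra.single g 1 := by
    rw [MonoidAlgebra.smul_single', mul_one]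
  rw [hb, map_smul, map_smul]
  congr 1
  ext k
  have := congrFun (congrFun h g) (g⁻¹ * k)
  simpa [charOf, mul_inv_cancel_left] using this

variable (T : G → G → ℂ)

/-- the element F g of ℂ[G] with coefficients h ↦ T g (g⁻¹ h). -/
noncomputable def Fg (hfin : ∀ g : G, {a : G | T g a ≠ 0}.Finite) (g : G) :
    MonoidAlgebra ℂ G :=
  MonoidAlgebra.ofCoeff <| Finsupp.ofSupportFinite (fun h => T g (g⁻¹ * h)) (by
    apply Set.Finite.subset ((hfin g).image (fun a => g * a))
    intro h hh
    exact ⟨g⁻¹ * h, hh, by group⟩)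

lemma Fg_apply (hfin : ∀ g : G, {a : G | T g a ≠ 0}.Finite) (g h : G) :
    (Fg T hfin g).coeff h = T g (g⁻¹ * h) := rfl

lemma Fg_mul (hadd : ∀ g₁ g₂ a : G, T (g₂ * g₁) a = T g₂ (g₁ * a * g₁⁻¹) + T g₁ a)
    (hfin : ∀ g : G, {a : G | T g a ≠ 0}.Finite) (g h : G) :
    Fg T hfin (g * h) =
      Fg T hfin g * MonoidAlgebra.single h 1 + MonoidAlgebra.single g 1 * Fg T hfin h := by
  ext k
  rw [MonoidAlgebra.coeff_add, Finsupp.add_apply, MonoidAlgebra.mul_single_apply, MonoidAlgebra.single_mul_apply,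
    Fg_apply, Fg_apply, Fg_apply]
  rw [mul_one, one_mul]
  have := hadd h g ((g * h)⁻¹ * k)
  rw [this]
  congr 2 <;> group

noncomputable def Xof (hfin : ∀ g : G, {a : G | T g a ≠ 0}.Finite) :
    MonoidAlgebra ℂ G →ₗ[ℂ] MonoidAlgebra ℂ G :=
  Finsupp.lsum ℂ (fun g => LinearMap.toSpanSingleton ℂ _ (Fg T hfin g)) ∘ₗ
    (MonoidAlgebra.coeffLinearEquiv ℂ).toLinearMap

lemma Xof_single (hfin : ∀ g : G, {a : G | T g a ≠ 0}.Finite) (g : G) (b : ℂ) :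
    Xof T hfin (MonoidAlgebra.single g b) = b • Fg T hfin g := by
  show (Finsupp.lsum ℂ (fun g => LinearMap.toSpanSingleton ℂ _ (Fg T hfin g))) (Finsupp.single g b) = _
  erw [Finsupp.lsum_single]
  rw [LinearMap.toSpanSingleton_apply]

lemma Xof_deriv (hadd : ∀ g₁ g₂ a : G, T (g₂ * g₁) a = T g₂ (g₁ * a * g₁⁻¹) + T g₁ a)
    (hfin : ∀ g : G, {a : G | T g a ≠ 0}.Finite) :
    ∀ u v : MonoidAlgebra ℂ G,
      Xof T hfin (u * v) = Xof T hfin (u) * v + u * Xof T hfin v := by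
  intro u v
  induction u using MonoidAlgebra.induction_linear with
  | zero => simp
  | add u₁ u₂ h1 h2 =>
      simp only [map_add, add_mul, mul_add, h1, h2]
      abel
  | single g c =>
      induction v using MonoidAlgebra.induction_linear with
      | zero => simp
      | add v₁ v₂ h1 h2 =>
          simp only [map_add, add_mul, mul_add, h1, h2]
          abel
      | single h d =>
          show Xof T hfin (MonoidAlgebra.single g c * MonoidAlgebra.single h d) = _
          rw [MonoidAlgebra.single_mul_single, Xof_single, Fg_mul T hadd hfin,
            Xof_single, Xof_single]
          have e1 : (MonoidAlgebra.single h d : MonoidAlgebra ℂ G) = d • MonoidAlgebra.single h 1 := by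
            rw [MonoidAlgebra.smul_single', mul_one]
          have e2 : (MonoidAlgebra.single g c : MonoidAlgebra ℂ G) = c • MonoidAlgebra.single g 1 := by
            rw [MonoidAlgebra.smul_single', mul_one]
          rw [e1, e2]
          simp only [smul_add, mul_smul_comm, smul_mul_assoc, smul_smul]
          rw [mul_comm d c]

lemma charOf_Xof (hfin : ∀ g : G, {a : G | T g a ≠ 0}.Finite) :
    charOf (Xof T hfin) = T := by
  funext g a
  simp [charOf, Xof_single, Fg_apply, inv_mul_cancel_left]

end Aux

theorem charOf_derivations_bijective {G : Type*} [Group G] :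
    (∀ X Y : MonoidAlgebra ℂ G →ₗ[ℂ] MonoidAlgebra ℂ G, charOf (X + Y) = charOf X + charOf Y) ∧
    (∀ (c : ℂ) (X : MonoidAlgebra ℂ G →ₗ[ℂ] MonoidAlgebra ℂ G), charOf (c • X) = c • charOf X) ∧
    Set.InjOn (charOf (G := G))
      {X | ∀ u v : MonoidAlgebra ℂ G, X (u * v) = X u * v + u * X v} ∧
    charOf (G := G) '' {X | ∀ u v : MonoidAlgebra ℂ G, X (u * v) = X u * v + u * X v} =
      {T : G → G → ℂ |
        (∀ g₁ g₂ a : G, T (g₂ * g₁) a = T g₂ (g₁ * a * g₁⁻¹) + T g₁ a) ∧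
        (∀ g : G, {a : G | T g a ≠ 0}.Finite)} := by
  refine ⟨?_, ?_, ?_, ?_⟩
  · intro X Y; funext g a; simp [charOf, MonoidAlgebra.coeff_add]
  · intro c X; funext g a; simp [charOf, MonoidAlgebra.coeff_smul]
  · intro X _ Y _ h; exact charOf_injective X Y h
  · ext T
    constructor
    · rintro ⟨X, hX, rfl⟩
      refine ⟨?_, ?_⟩
      · intro g₁ g₂ a
        have h1 : (MonoidAlgebra.single (g₂ * g₁) 1 : MonoidAlgebra ℂ G) =
            MonoidAlgebra.single g₂ 1 * MonoidAlgebra.single g₁ 1 := by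
          rw [MonoidAlgebra.single_mul_single, one_mul]
        show (X (MonoidAlgebra.single (g₂ * g₁) 1)).coeff (g₂ * g₁ * a) = _
        rw [h1, hX]
        rw [MonoidAlgebra.coeff_add, Finsupp.add_apply, MonoidAlgebra.mul_single_apply, MonoidAlgebra.single_mul_apply,
          mul_one, one_mul]
        show _ = (X (MonoidAlgebra.single g₂ 1)).coeff (g₂ * (g₁ * a * g₁⁻¹)) +
          (X (MonoidAlgebra.single g₁ 1)).coeff (g₁ * a)
        congr 2 <;> group
      · intro g
        apply Set.Finite.subset
          (((X (MonoidAlgebra.single g 1)).coeff.support.finite_toSet).image (fun h => g⁻¹ * h))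
        intro a ha
        exact ⟨g * a, by simpa [charOf] using ha, by group⟩
    · rintro ⟨hadd, hfin⟩
      exact ⟨Xof T hfin, Xof_deriv T hadd hfin, charOf_Xof T hfin⟩
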